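/- Let R be a commutative ℚ-algebra, let f, g ∈ R[t], and let n ≥ 1. Then the (n−1)-st derivative of the Wronskian fg′ − f′g is given by (fg′ − f′g)^{(n−1)} = Σ_{i=0}^{n} d_{i,n−i} f^{(i)} g^{(n−i)}, where d_{i,j} = (j−i)·(i+j−1)!/(i!·j!) for i+j ≥ 1 (equivalently, d_{i,n−i} = (n−2i)(n−1)!/(i!(n−i)!)). In particular, the coefficients d_{i,j} are the unique solution of the recurrence d_{i,j} = d_{i−1,j} + d_{i,j−1} for i,j ≥ 1 with boundary values d_{0,j} = 1 = −d_{j,0} for j ≥ 1 and d_{0,0} = 0, and they satisfy d_{i,j} = −d_{j,i}. -/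

import Mathlib

noncomputable section

namespace WittOM

/-- The coefficients `d_{i,j} = (j-i)·(i+j-1)!/(i!·j!)`. -/
def dcoef (i j : ℕ) : ℚ :=
  ((j : ℚ) - (i : ℚ)) * (Nat.factorial (i + j - 1)) / (Nat.factorial i * Nat.factorial j)

lemma dcoef_zero_zero : dcoef 0 0 = 0 := by simp [dcoef]

lemma dcoef_zero_left (j : ℕ) (hj : 1 ≤ j) : dcoef 0 j = 1 := by
  have h : (j : ℚ) * (Nat.factorial (j - 1)) = Nat.factorial j := by
    rw_mod_cast [Nat.mul_factorial_pred (Nat.one_le_iff_ne_zero.mp hj)]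
  have hj0 : (Nat.factorial j : ℚ) ≠ 0 := by exact_mod_cast (Nat.factorial_pos j).ne'
  simp only [dcoef, Nat.factorial_zero, Nat.cast_one, Nat.cast_zero, sub_zero, zero_add, one_mul]
  rw [h, div_self hj0]

lemma dcoef_antisymm (i j : ℕ) : dcoef i j = - dcoef j i := by
  simp only [dcoef, Nat.add_comm j i]
  ring

lemma dcoef_zero_right (j : ℕ) (hj : 1 ≤ j) : dcoef j 0 = -1 := by
  rw [dcoef_antisymm, dcoef_zero_left j hj]

lemma dcoef_rec (a b : ℕ) :
    dcoef (a + 1) (b + 1) = dcoef a (b + 1) + dcoef (a + 1) b := by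
  simp only [dcoef]
  have h1 : a + 1 + (b + 1) - 1 = a + b + 1 := by omega
  have h2 : a + (b + 1) - 1 = a + b := by omega
  have h3 : a + 1 + b - 1 = a + b := by omega
  rw [h1, h2, h3]
  have e1 : (Nat.factorial (a + b + 1) : ℚ) = (a + b + 1) * Nat.factorial (a + b) := by
    push_cast [Nat.factorial_succ]; ring
  have e2 : (Nat.factorial (a + 1) : ℚ) = (a + 1) * Nat.factorial a := by
    push_cast [Nat.factorial_succ]; ring
  have e3 : (Nat.factorial (b + 1) : ℚ) = (b + 1) * Nat.factorial b := by
    push_cast [Nat.factorial_succ]; ring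
  have na : (Nat.factorial a : ℚ) ≠ 0 := by exact_mod_cast (Nat.factorial_pos a).ne'
  have nb : (Nat.factorial b : ℚ) ≠ 0 := by exact_mod_cast (Nat.factorial_pos b).ne'
  rw [e1, e2, e3]
  field_simp
  push_cast
  ring

/-- **Statement 2.** For `f, g ∈ R[t]` over a commutative `ℚ`-algebra `R` and `n ≥ 1`,
`(fg' - f'g)^{(n-1)} = Σ_{i=0}^{n} d_{i,n-i} f^{(i)} g^{(n-i)}` with
`d_{i,j} = (j-i)(i+j-1)!/(i!·j!)` (equivalently `d_{i,n-i} = (n-2i)(n-1)!/(i!(n-i)!)`);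
the `d_{i,j}` are antisymmetric and are the unique solution of the recurrence
`d_{i,j} = d_{i-1,j} + d_{i,j-1}` (`i,j ≥ 1`) with boundary values
`d_{0,j} = 1 = -d_{j,0}` (`j ≥ 1`) and `d_{0,0} = 0`. -/
theorem statement_2 (R : Type*) [CommRing R] [Algebra ℚ R]
    (f g : Polynomial R) (n : ℕ) (hn : 1 ≤ n) :
    (Polynomial.derivative^[n - 1]
        (f * Polynomial.derivative g - Polynomial.derivative f * g) =
      ∑ i ∈ Finset.range (n + 1),
        dcoef i (n - i) • (Polynomial.derivative^[i] f * Polynomial.derivative^[n - i] g)) ∧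
    (∀ i, i ≤ n →
      dcoef i (n - i) =
        ((n : ℚ) - 2 * (i : ℚ)) * (Nat.factorial (n - 1)) /
          (Nat.factorial i * Nat.factorial (n - i))) ∧
    (∀ i j, dcoef i j = - dcoef j i) ∧
    (∀ d' : ℕ → ℕ → ℚ,
      (∀ i j, 1 ≤ i → 1 ≤ j → d' i j = d' (i - 1) j + d' i (j - 1)) →
      (∀ j, 1 ≤ j → d' 0 j = 1) → (∀ j, 1 ≤ j → d' j 0 = -1) → d' 0 0 = 0 →
      d' = dcoef) := by
  refine ⟨?_, ?_, dcoef_antisymm, ?_⟩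
  · -- main derivative identity, by induction on n starting from 1
    induction n, hn using Nat.le_induction with
    | base =>
      simp [Finset.sum_range_succ, dcoef_zero_left 1 le_rfl, dcoef_zero_right 1 le_rfl,
        sub_eq_add_neg]
    | succ n hn ih =>
      have hstep : (n + 1) - 1 = n := by omega
      rw [hstep, ← Nat.sub_add_cancel hn, Function.iterate_succ_apply',
        Nat.sub_add_cancel hn, ih, map_sum]
      have expand : ∀ i ∈ Finset.range (n + 1),
          Polynomial.derivative (dcoef i (n - i) •
            (Polynomial.derivative^[i] f * Polynomial.derivative^[n - i] g)) =
          dcoef i (n - i) • (Polynomial.derivative^[i + 1] f * Polynomial.derivative^[n - i] g)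
          + dcoef i (n - i) •
              (Polynomial.derivative^[i] f * Polynomial.derivative^[n + 1 - i] g) := by
        intro i hi
        rw [Finset.mem_range] at hi
        have h1 : n + 1 - i = (n - i) + 1 := by omega
        rw [Polynomial.derivative_smul, Polynomial.derivative_mul, smul_add, h1,
          Function.iterate_succ_apply', Function.iterate_succ_apply']
      rw [Finset.sum_congr rfl expand, Finset.sum_add_distrib]
      -- now compare with target sum
      have key : ∀ i ∈ Finset.range (n + 2),
          dcoef i (n + 1 - i) •
            (Polynomial.derivative^[i] f * Polynomial.derivative^[n + 1 - i] g) =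
          (if i = 0 then 0 else dcoef (i - 1) (n + 1 - i) •
            (Polynomial.derivative^[i] f * Polynomial.derivative^[n + 1 - i] g))
          + (if i = n + 1 then 0 else dcoef i (n - i) •
            (Polynomial.derivative^[i] f * Polynomial.derivative^[n + 1 - i] g)) := by
        intro i hi
        rw [Finset.mem_range] at hi
        rcases Nat.eq_zero_or_pos i with rfl | hi1
        · simp only [if_pos rfl, zero_add, if_neg (show ¬(0 = n + 1) by omega), Nat.sub_zero,
            dcoef_zero_left (n + 1) (by omega), dcoef_zero_left n hn, if_true, ite_true]
        · rcases eq_or_lt_of_le (Nat.lt_succ_iff.mp (by omega : i < n + 2)) with hi2 | hi2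
          · rw [if_neg (by omega), if_pos hi2, add_zero, hi2]
            have h1 : n + 1 - (n + 1) = 0 := by omega
            have h2 : n + 1 - 1 = n := by omega
            rw [h1, h2, dcoef_zero_right (n + 1) (by omega), dcoef_zero_right n hn]
          · rw [if_neg (by omega), if_neg (by omega), ← add_smul]
            congr 1
            obtain ⟨a, rfl⟩ : ∃ a, i = a + 1 := ⟨i - 1, by omega⟩
            have h1 : n + 1 - (a + 1) = (n - (a + 1)) + 1 := by omega
            have h2 : a + 1 - 1 = a := by omega
            rw [h1, h2, dcoef_rec]
      rw [Finset.sum_congr rfl key, Finset.sum_add_distrib]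
      congr 1
      · -- shifted sum
        rw [Finset.sum_range_succ' (fun i => if i = 0 then 0 else dcoef (i - 1) (n + 1 - i) •
            (Polynomial.derivative^[i] f * Polynomial.derivative^[n + 1 - i] g)) (n + 1)]
        rw [if_pos rfl, add_zero]
        apply Finset.sum_congr rfl
        intro i hi
        rw [Finset.mem_range] at hi
        have h1 : i + 1 - 1 = i := by omega
        have h2 : n + 1 - (i + 1) = n - i := by omega
        rw [if_neg (Nat.succ_ne_zero i), h1, h2]
      · -- last term vanishes
        rw [Finset.sum_range_succ (fun i => if i = n + 1 then 0 else dcoef i (n - i) •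
            (Polynomial.derivative^[i] f * Polynomial.derivative^[n + 1 - i] g)) (n + 1)]
        rw [if_pos rfl, add_zero]
        apply Finset.sum_congr rfl
        intro i hi
        rw [Finset.mem_range] at hi
        rw [if_neg (by omega : ¬ i = n + 1)]
  · -- explicit formula
    intro i hi
    have h1 : i + (n - i) = n := by omega
    have h2 : ((n - i : ℕ) : ℚ) = (n : ℚ) - i := by
      push_cast [Nat.cast_sub hi]; ring
    simp only [dcoef, h1, h2]
    ring_nf
  · -- uniqueness
    intro d' hrec hb1 hb2 hb0
    suffices H : ∀ m i j, i + j = m → d' i j = dcoef i j by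
      funext i j; exact H (i + j) i j rfl
    intro m
    induction m using Nat.strong_induction_on with
    | _ m IH =>
      intro i j hij
      rcases Nat.eq_zero_or_pos i with rfl | hi
      · rcases Nat.eq_zero_or_pos j with rfl | hj
        · rw [hb0, dcoef_zero_zero]
        · rw [hb1 j hj, dcoef_zero_left j hj]
      · rcases Nat.eq_zero_or_pos j with rfl | hj
        · rw [hb2 i hi, dcoef_zero_right i hi]
        · obtain ⟨a, rfl⟩ : ∃ a, i = a + 1 := ⟨i - 1, by omega⟩
          obtain ⟨b, rfl⟩ : ∃ b, j = b + 1 := ⟨j - 1, by omega⟩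
          rw [hrec _ _ hi hj, dcoef_rec]
          simp only [Nat.add_sub_cancel]
          rw [IH (a + (b + 1)) (by omega) a (b + 1) rfl,
            IH ((a + 1) + b) (by omega) (a + 1) b rfl]

end WittOM
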